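/- arXiv:2509.09939 — 3 statements merged into one kernel-verified Lean document; each statement's English description precedes it below -/
import Mathlib

section
/- Let p ∈ {1,…,6} and let σ = {p, p+1, p+2}, with entries reduced mod 6 to representatives in {1,…,6}. Then the projection pr^G_{α_σ} of G onto the coordinates α_σ restricts to a group isomorphism of the standard face subgroup G^σ onto ∏_{i∈α_σ} G_i; in particular G^σ is isomorphic to ∏_{i∈α_σ} G_i. -/
namespace SB

/-- `cc n p` is the 0-based boundary of the `p`-th label sequence:
`cc n p = ⌈p·n/3⌉` for `p ≤ 3`, and `cc n p = n + ⌈(p-3)·n/3⌉` for `p ≥ 3`. -/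
def cc (n p : ℕ) : ℕ := if p < 3 then (p * n + 2) / 3 else n + ((p - 3) * n + 2) / 3

/-- The 0-based label sequence `α_{p+1}` (paper's `α_1,…,α_6` for `p = 0,…,5`)
as a finite set of coordinates in `Fin (2n)`. -/
def alphaF (n p : ℕ) : Finset (Fin (2 * n)) :=
  Finset.univ.filter (fun x => cc n p ≤ x.val ∧ x.val < cc n (p + 1))

/-- The 0-based label sequence `α_{t+1}` (for `t < 3`) as a finite set of
indices in `Fin n` (indexing the factors `A_j`). -/
def alphaN (n t : ℕ) : Finset (Fin n) :=
  Finset.univ.filter (fun x => cc n t ≤ x.val ∧ x.val < cc n (t + 1))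

/-- Reduction of a natural number modulo `2n`, as an element of `Fin (2n)`. -/
def idx {n : ℕ} (hn : 0 < n) (k : ℕ) : Fin (2 * n) := ⟨k % (2 * n), Nat.mod_lt _ (by omega)⟩

/-- Reduction of a natural number modulo `n`, as an element of `Fin n`
(this implements the paper's `j*`). -/
def idxN {n : ℕ} (hn : 0 < n) (k : ℕ) : Fin n := ⟨k % n, Nat.mod_lt _ hn⟩

/-- The set `Ȳ_i` of vectorized kernel generators: `y ∈ Y i` placed in
coordinate `i` with identity elsewhere. -/
def Ybar {n : ℕ} {G : Fin (2 * n) → Type} [∀ i, Group (G i)]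
    (Y : ∀ i, Set (G i)) (i : Fin (2 * n)) : Set (∀ i', G i') :=
  Pi.mulSingle i '' (Y i)

/-- The set `Z̄^j_{i,k}` of vectorized section generators: for `b ∈ A j`, the
element with `s j i b` in coordinate `i`, `s j k b⁻¹` in coordinate `k`, and
identity elsewhere. -/
def Zbar {n : ℕ} {A : Fin n → Type} [∀ j, CommGroup (A j)]
    {G : Fin (2 * n) → Type} [∀ i, Group (G i)]
    (s : ∀ (j : Fin n) (i : Fin (2 * n)), A j →* G i)
    (j : Fin n) (i k : Fin (2 * n)) : Set (∀ i', G i') :=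
  Set.range (fun b : A j => Pi.mulSingle i (s j i b) * Pi.mulSingle k (s j k b⁻¹))

-- auxiliary development

def Q (n p x : ℕ) : Prop :=
  (cc n p ≤ x ∧ x < cc n (p+1)) ∨ (cc n ((p+1)%6) ≤ x ∧ x < cc n ((p+1)%6+1)) ∨
  (cc n ((p+2)%6) ≤ x ∧ x < cc n ((p+2)%6+1))

lemma mem_S_iff {n : ℕ} (p : ℕ) (x : Fin (2*n)) :
    x ∈ alphaF n p ∪ alphaF n ((p+1)%6) ∪ alphaF n ((p+2)%6) ↔ Q n p x.val := by
  simp [alphaF, Q, Finset.mem_union, Finset.mem_filter, or_assoc]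

lemma Q_xor {n : ℕ} (hn : 3 ≤ n) (p : ℕ) (hp : p < 6) (x : ℕ) (hx : x < n) :
    Q n p x ↔ ¬ Q n p (x + n) := by
  interval_cases p <;> simp only [Q, cc] <;> norm_num <;> omega

lemma modn_eq {n : ℕ} (x : ℕ) (hx : x < 2 * n) (hn : 0 < n) :
    x % n = if x < n then x else x - n := by
  split
  · exact Nat.mod_eq_of_lt (by omega)
  · rw [Nat.mod_eq_sub_mod (by omega), Nat.mod_eq_of_lt (by omega)]

lemma idxN_surj {n : ℕ} (hn : 3 ≤ n) (p : ℕ) (hp : p < 6) (hn0 : 0 < n) (j' : Fin n) :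
    ∃ j : Fin (2*n), j ∉ (alphaF n p ∪ alphaF n ((p+1)%6) ∪ alphaF n ((p+2)%6)) ∧
      idxN hn0 j.val = j' := by
  by_cases h : Q n p j'.val
  · refine ⟨⟨j'.val + n, by have := j'.isLt; omega⟩, ?_, ?_⟩
    · rw [mem_S_iff]
      exact (Q_xor hn p hp j'.val j'.isLt).mp h
    · ext
      simp only [idxN]
      rw [modn_eq _ (by have := j'.isLt; omega) hn0]
      have hnn : ¬ (j'.val + n < n) := by omega
      rw [if_neg hnn]
      omega
  · refine ⟨⟨j'.val, by omega⟩, ?_, ?_⟩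
    · rw [mem_S_iff]; exact h
    · ext
      simp only [idxN]
      rw [modn_eq _ (by have := j'.isLt; omega) hn0, if_pos j'.isLt]

lemma idxN_inj {n : ℕ} (hn : 3 ≤ n) (p : ℕ) (hp : p < 6) (hn0 : 0 < n)
    (j₁ j₂ : Fin (2*n))
    (h₁ : j₁ ∉ (alphaF n p ∪ alphaF n ((p+1)%6) ∪ alphaF n ((p+2)%6)))
    (h₂ : j₂ ∉ (alphaF n p ∪ alphaF n ((p+1)%6) ∪ alphaF n ((p+2)%6)))
    (h : idxN hn0 j₁.val = idxN hn0 j₂.val) : j₁ = j₂ := by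
  rw [mem_S_iff] at h₁ h₂
  have hm : j₁.val % n = j₂.val % n := congrArg Fin.val h
  rw [modn_eq _ j₁.isLt hn0, modn_eq _ j₂.isLt hn0] at hm
  have hxor : ∀ x : ℕ, x < n → (Q n p x ↔ ¬ Q n p (x + n)) := fun x hx => Q_xor hn p hp x hx
  ext
  split_ifs at hm with a b b
  · omega
  · exfalso
    have : j₁.val + n = j₂.val := by omega
    rw [← this] at h₂
    exact h₁ ((hxor j₁.val a).mpr h₂)
  · exfalso
    have : j₂.val + n = j₁.val := by omega
    rw [← this] at h₁
    exact h₂ ((hxor j₂.val b).mpr h₁)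
  · omega

open Function

section
variable {n : ℕ}
variable {A : Fin n → Type} [∀ j, CommGroup (A j)]
variable {G : Fin (2*n) → Type} [∀ i, Group (G i)]
variable (φ : ∀ i, G i →* ∀ j, A j) (s : ∀ (j : Fin n) (i : Fin (2*n)), A j →* G i)

def Psi (i : Fin (2*n)) : (∀ j, A j) →* (∀ j, A j) :=
  ∏ j : Fin n, ((φ i).comp (s j i)).comp (Pi.evalMonoidHom A j)

lemma Psi_single (i : Fin (2*n)) (j : Fin n) (b : A j) :
    Psi φ s i (Pi.mulSingle j b) = φ i (s j i b) := by
  rw [Psi, MonoidHom.finset_prod_apply]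
  rw [Finset.prod_eq_single j]
  · simp
  · intro j' _ hj'
    simp [Pi.mulSingle_eq_of_ne hj']
  · simp

lemma Psi_surj (i : Fin (2*n)) (Y : ∀ i, Set (G i))
    (hφ : Surjective (φ i))
    (hYker : ∀ y ∈ Y i, φ i y = 1)
    (hYgen : Subgroup.closure (Y i ∪ ⋃ j, Set.range (s j i)) = ⊤) :
    Surjective (Psi φ s i) := by
  rw [← MonoidHom.range_eq_top]
  have h1 : Subgroup.map (φ i) ⊤ = ⊤ := by
    rw [← MonoidHom.range_eq_map, MonoidHom.range_eq_top]; exact hφ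
  rw [← top_le_iff, ← h1, ← hYgen, MonoidHom.map_closure]
  apply Subgroup.closure_le _ |>.mpr
  rintro u ⟨g, hg, rfl⟩
  rcases hg with hg | hg
  · have : φ i g = 1 := hYker g hg
    rw [this]; exact one_mem _
  · obtain ⟨T, ⟨j, rfl⟩, hT⟩ := hg
    obtain ⟨b, rfl⟩ := hT
    exact ⟨Pi.mulSingle j b, Psi_single φ s i j b⟩

/-- additive pi equivalence -/
def addPiEquiv : Additive (∀ j, A j) ≃+ (∀ j, Additive (A j)) where
  toFun x j := Additive.ofMul (Additive.toMul x j)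
  invFun x := Additive.ofMul fun j => Additive.toMul (x j)
  left_inv _ := rfl
  right_inv _ := rfl
  map_add' _ _ := rfl

lemma Psi_inj [∀ j, Module.Finite ℤ (Additive (A j))] (i : Fin (2*n))
    (hsurj : Surjective (Psi φ s i)) : Injective (Psi φ s i) := by
  have hNoeth : IsNoetherian ℤ (Additive (∀ j, A j)) :=
    isNoetherian_of_linearEquiv (addPiEquiv (A := A)).symm.toIntLinearEquiv
  let F : Additive (∀ j, A j) →ₗ[ℤ] Additive (∀ j, A j) :=
    (MonoidHom.toAdditive (Psi φ s i)).toIntLinearMap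
  have hFs : Surjective F := hsurj
  have hFi := IsNoetherian.injective_of_surjective_endomorphism F hFs
  exact hFi

end

section
variable {n : ℕ}
variable {A : Fin n → Type} [∀ j, CommGroup (A j)]
variable {G : Fin (2*n) → Type} [∀ i, Group (G i)]
variable (φ : ∀ i, G i →* ∀ j, A j) (s : ∀ (j : Fin n) (i : Fin (2*n)), A j →* G i)

def W (hn0 : 0 < n) (S : Finset (Fin (2*n)))
    (ψ : ∀ i : Fin (2*n), (∀ j, A j) →* (∀ j, A j)) : (∀ i, G i) →* (∀ j, A j) :=
  (∏ j ∈ Sᶜ, (MonoidHom.mulSingle A (idxN hn0 j.val)).comp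
      ((Pi.evalMonoidHom A (idxN hn0 j.val)).comp ((φ j).comp (Pi.evalMonoidHom G j))))
  * ∏ i ∈ S, (ψ i).comp ((φ i).comp (Pi.evalMonoidHom G i))

lemma W_apply (hn0 : 0 < n) (S : Finset (Fin (2*n)))
    (ψ : ∀ i : Fin (2*n), (∀ j, A j) →* (∀ j, A j)) (g : ∀ i, G i) :
    W φ hn0 S ψ g =
      (∏ j ∈ Sᶜ, Pi.mulSingle (idxN hn0 j.val) ((φ j (g j)) (idxN hn0 j.val)))
      * ∏ i ∈ S, ψ i (φ i (g i)) := by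
  simp [W, MonoidHom.finset_prod_apply, MonoidHom.mulSingle_apply]

lemma W_Ybar (hn0 : 0 < n) (S : Finset (Fin (2*n)))
    (ψ : ∀ i : Fin (2*n), (∀ j, A j) →* (∀ j, A j))
    (i : Fin (2*n)) (hi : i ∈ S) (y : G i) (hy : φ i y = 1) :
    W φ hn0 S ψ (Pi.mulSingle i y) = 1 := by
  rw [W_apply]
  have h1 : ∀ j ∈ Sᶜ, Pi.mulSingle (idxN hn0 j.val)
      ((φ j (Pi.mulSingle i y j)) (idxN hn0 j.val)) = 1 := by
    intro j hj
    have hji : j ≠ i := by rintro rfl; exact (Finset.mem_compl.mp hj) hi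
    rw [Pi.mulSingle_eq_of_ne hji, map_one, Pi.one_apply, Pi.mulSingle_one]
  have h2 : ∀ i' ∈ S, ψ i' (φ i' (Pi.mulSingle i y i')) = 1 := by
    intro i' _
    by_cases hii : i' = i
    · subst hii; rw [Pi.mulSingle_eq_same, hy, map_one]
    · rw [Pi.mulSingle_eq_of_ne hii, map_one, map_one]
  rw [Finset.prod_congr rfl h1, Finset.prod_congr rfl h2, Finset.prod_const_one,
    Finset.prod_const_one, one_mul]

lemma W_Zbar (hn0 : 0 < n) (S : Finset (Fin (2*n)))
    (ψ : ∀ i : Fin (2*n), (∀ j, A j) →* (∀ j, A j))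
    (hs : ∀ j i a, φ i (s j i a) j = a)
    (i k : Fin (2*n)) (hi : i ∈ S) (hk : k ∉ S) (b : A (idxN hn0 k.val))
    (hψ : ψ i (φ i (s (idxN hn0 k.val) i b)) = Pi.mulSingle (idxN hn0 k.val) b) :
    W φ hn0 S ψ (Pi.mulSingle i (s (idxN hn0 k.val) i b)
      * Pi.mulSingle k (s (idxN hn0 k.val) k b⁻¹)) = 1 := by
  have hik : i ≠ k := by rintro rfl; exact hk hi
  have hgk : (Pi.mulSingle i (s (idxN hn0 k.val) i b)
      * Pi.mulSingle k (s (idxN hn0 k.val) k b⁻¹)) k = s (idxN hn0 k.val) k b⁻¹ := by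
    rw [Pi.mul_apply, Pi.mulSingle_eq_of_ne (Ne.symm hik), Pi.mulSingle_eq_same, one_mul]
  have hgi : (Pi.mulSingle i (s (idxN hn0 k.val) i b)
      * Pi.mulSingle k (s (idxN hn0 k.val) k b⁻¹)) i = s (idxN hn0 k.val) i b := by
    rw [Pi.mul_apply, Pi.mulSingle_eq_same, Pi.mulSingle_eq_of_ne hik, mul_one]
  have hgo : ∀ j : Fin (2*n), j ≠ i → j ≠ k → (Pi.mulSingle i (s (idxN hn0 k.val) i b)
      * Pi.mulSingle k (s (idxN hn0 k.val) k b⁻¹)) j = 1 := by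
    intro j hji hjk
    rw [Pi.mul_apply, Pi.mulSingle_eq_of_ne hji, Pi.mulSingle_eq_of_ne hjk, one_mul]
  rw [W_apply]
  rw [Finset.prod_eq_single_of_mem k (Finset.mem_compl.mpr hk) (fun j hj hjk => by
    have hji : j ≠ i := by rintro rfl; exact (Finset.mem_compl.mp hj) hi
    rw [hgo j hji hjk, map_one, Pi.one_apply, Pi.mulSingle_one])]
  rw [Finset.prod_eq_single_of_mem i hi (fun i' hi' hii => by
    have hik' : i' ≠ k := by rintro rfl; exact hk hi'
    rw [hgo i' hii hik', map_one, map_one])]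
  rw [hgk, hgi, hs, hψ, ← Pi.mulSingle_mul, inv_mul_cancel, Pi.mulSingle_one]

def res (S : Finset (Fin (2*n))) : (∀ i, G i) →* (∀ i : S, G i.1) :=
  Pi.monoidHom fun i => Pi.evalMonoidHom G i.1

lemma res_mulSingle_mem (S : Finset (Fin (2*n))) (i : S) (g : G i.1) :
    res (G := G) S (Pi.mulSingle i.1 g) = Pi.mulSingle i g := by
  funext k
  by_cases hk : k = i
  · subst hk; simp [res, Pi.monoidHom, Pi.evalMonoidHom]
  · have hk' : k.1 ≠ i.1 := fun h => hk (Subtype.ext h)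
    show Pi.mulSingle i.1 g k.1 = _
    rw [Pi.mulSingle_eq_of_ne hk', Pi.mulSingle_eq_of_ne hk]

lemma res_mulSingle_not_mem (S : Finset (Fin (2*n))) (k : Fin (2*n)) (hk : k ∉ S) (g : G k) :
    res (G := G) S (Pi.mulSingle k g) = 1 := by
  funext i
  have hik : k ≠ i.1 := fun h => hk (h ▸ i.2)
  show Pi.mulSingle k g i.1 = _
  rw [Pi.mulSingle_eq_of_ne (Ne.symm hik)]
  rfl

lemma mem_of_mulSingle {ι : Type} [DecidableEq ι] [Fintype ι] {M : ι → Type}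
    [∀ i, Group (M i)] (R : Subgroup (∀ i, M i))
    (h : ∀ i (g : M i), Pi.mulSingle i g ∈ R) (u : ∀ i, M i) : u ∈ R := by
  classical
  have key : ∀ T : Finset ι, ∀ u : ∀ i, M i, (∀ i, i ∉ T → u i = 1) → u ∈ R := by
    intro T
    induction T using Finset.induction_on with
    | empty =>
      intro u hu
      have : u = 1 := funext fun i => hu i (Finset.notMem_empty i)
      rw [this]; exact one_mem R
    | insert _ _ ha =>
      rename_i a T ih
      intro u hu
      have hdecomp : u = Pi.mulSingle a (u a) * Function.update u a 1 := by
        funext i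
        by_cases hia : i = a
        · subst hia; simp
        · rw [Pi.mul_apply, Pi.mulSingle_eq_of_ne hia, Function.update_of_ne hia, one_mul]
      rw [hdecomp]
      refine mul_mem (h a (u a)) (ih _ (fun i hi => ?_))
      by_cases hia : i = a
      · subst hia; simp
      · rw [Function.update_of_ne hia]
        exact hu i (fun hmem => by
          rcases Finset.mem_insert.mp hmem with h' | h'
          · exact hia h'
          · exact hi h')
  exact key Finset.univ u (fun i hi => absurd (Finset.mem_univ i) hi)

end

section
variable {n : ℕ}
variable {A : Fin n → Type} [∀ j, CommGroup (A j)]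
variable {G : Fin (2*n) → Type} [∀ i, Group (G i)]

theorem main_aux [∀ j, Module.Finite ℤ (Additive (A j))] (hn0 : 0 < n)
    (φ : ∀ i, G i →* ∀ j, A j) (hφ : ∀ i, Function.Surjective (φ i))
    (s : ∀ (j : Fin n) (i : Fin (2*n)), A j →* G i)
    (hs : ∀ j i a, φ i (s j i a) j = a)
    (Y : ∀ i, Set (G i))
    (hYker : ∀ i, ∀ y ∈ Y i, φ i y = 1)
    (hYgen : ∀ i, Subgroup.closure (Y i ∪ ⋃ j, Set.range (s j i)) = ⊤)
    (S : Finset (Fin (2*n)))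
    (hsurjN : ∀ j' : Fin n, ∃ j, j ∉ S ∧ idxN hn0 j.val = j')
    (hinjN : ∀ j₁ j₂, j₁ ∉ S → j₂ ∉ S → idxN hn0 j₁.val = idxN hn0 j₂.val → j₁ = j₂) :
    ∃ e : (Subgroup.closure (⋃ i ∈ S, (Ybar Y i ∪
          ⋃ j ∈ (Sᶜ : Finset (Fin (2*n))), Zbar s (idxN hn0 j.val) i j))) ≃* (∀ i : S, G i.1),
      ∀ x (i : S), e x i = (x : ∀ i', G i') i.1 := by
  classical
  set gens : Set (∀ i', G i') := ⋃ i ∈ S, (Ybar Y i ∪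
      ⋃ j ∈ (Sᶜ : Finset (Fin (2*n))), Zbar s (idxN hn0 j.val) i j) with hgens
  set H := Subgroup.closure gens with hH
  let f : H →* (∀ i : S, G i.1) := (res (G := G) S).comp H.subtype
  have hPsiSurj : ∀ i, Function.Surjective (Psi φ s i) :=
    fun i => Psi_surj φ s i Y (hφ i) (hYker i) (hYgen i)
  have hPsiBij : ∀ i, Function.Bijective (Psi φ s i) :=
    fun i => ⟨Psi_inj φ s i (hPsiSurj i), hPsiSurj i⟩
  let ψe : ∀ _ : Fin (2*n), (∀ j, A j) ≃* (∀ j, A j) :=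
    fun i => MulEquiv.ofBijective _ (hPsiBij i)
  let ψ : ∀ _ : Fin (2*n), (∀ j, A j) →* (∀ j, A j) := fun i => (ψe i).symm.toMonoidHom
  have hψ : ∀ i c, ψ i (Psi φ s i c) = c := fun i c => (ψe i).symm_apply_apply c
  -- membership of generators
  have hYmem : ∀ i, i ∈ S → ∀ y ∈ Y i, Pi.mulSingle i y ∈ gens := by
    intro i hi y hy
    exact Set.mem_iUnion₂.mpr ⟨i, hi, Or.inl ⟨y, hy, rfl⟩⟩
  have hZmem : ∀ i, i ∈ S → ∀ k, k ∉ S → ∀ b : A (idxN hn0 k.val),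
      Pi.mulSingle i (s (idxN hn0 k.val) i b) *
        Pi.mulSingle k (s (idxN hn0 k.val) k b⁻¹) ∈ gens := by
    intro i hi k hk b
    exact Set.mem_iUnion₂.mpr ⟨i, hi, Or.inr
      (Set.mem_iUnion₂.mpr ⟨k, Finset.mem_compl.mpr hk, ⟨b, rfl⟩⟩)⟩
  -- destructuring of generators
  have hgensElim : ∀ g ∈ gens, ∃ i, i ∈ S ∧
      ((∃ y ∈ Y i, g = Pi.mulSingle i y) ∨
       (∃ k, k ∉ S ∧ ∃ b : A (idxN hn0 k.val),
          g = Pi.mulSingle i (s (idxN hn0 k.val) i b) *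
              Pi.mulSingle k (s (idxN hn0 k.val) k b⁻¹))) := by
    intro g hg
    obtain ⟨i, hi, hg⟩ := Set.mem_iUnion₂.mp hg
    refine ⟨i, hi, ?_⟩
    rcases hg with ⟨y, hy, rfl⟩ | hg
    · exact Or.inl ⟨y, hy, rfl⟩
    · obtain ⟨k, hk, b, rfl⟩ := Set.mem_iUnion₂.mp hg
      exact Or.inr ⟨k, Finset.mem_compl.mp hk, b, rfl⟩
  -- surjectivity
  have hfsurj : Function.Surjective f := by
    rw [← MonoidHom.range_eq_top]
    show ((res (G := G) S).comp H.subtype).range = ⊤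
    rw [MonoidHom.range_comp, Subgroup.range_subtype, hH, MonoidHom.map_closure,
      Subgroup.eq_top_iff']
    intro u
    refine mem_of_mulSingle _ (fun i g => ?_) u
    suffices h : (⊤ : Subgroup (G i.1)) ≤ Subgroup.comap
        (MonoidHom.mulSingle (fun i : S => G i.1) i)
        (Subgroup.closure ((res (G := G) S) '' gens)) by
      exact h (Subgroup.mem_top g)
    rw [← hYgen i.1]
    rw [Subgroup.closure_le]
    rintro g (hgY | hgs)
    · apply Subgroup.subset_closure
      exact ⟨Pi.mulSingle i.1 g, hYmem i.1 i.2 g hgY, res_mulSingle_mem S i g⟩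
    · obtain ⟨T, ⟨j, rfl⟩, b, rfl⟩ := hgs
      obtain ⟨k, hk, hkj⟩ := hsurjN j
      subst hkj
      apply Subgroup.subset_closure
      refine ⟨Pi.mulSingle i.1 (s (idxN hn0 k.val) i.1 b) *
        Pi.mulSingle k (s (idxN hn0 k.val) k b⁻¹), hZmem i.1 i.2 k hk b, ?_⟩
      show res (G := G) S _ = _
      rw [map_mul, res_mulSingle_mem S i, res_mulSingle_not_mem S k hk, mul_one]
      rfl
  -- injectivity
  have hfinj : Function.Injective f := by
    rw [injective_iff_map_eq_one]
    intro x hx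
    have hx1 : ∀ i, i ∈ S → (x : ∀ i', G i') i = 1 := fun i hi => congrFun hx ⟨i, hi⟩
    have hWgens : ∀ g ∈ gens, W φ hn0 S ψ g = 1 := by
      intro g hg
      obtain ⟨i, hi, hcase⟩ := hgensElim g hg
      rcases hcase with ⟨y, hy, rfl⟩ | ⟨k, hk, b, rfl⟩
      · exact W_Ybar φ hn0 S ψ i hi y (hYker i y hy)
      · exact W_Zbar φ s hn0 S ψ hs i k hi hk b (by
          rw [show φ i (s (idxN hn0 k.val) i b) = Psi φ s i (Pi.mulSingle (idxN hn0 k.val) b)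
            from (Psi_single φ s i _ b).symm, hψ])
    have hWx : W φ hn0 S ψ (x : ∀ i', G i') = 1 := by
      have hle : H ≤ MonoidHom.ker (W φ hn0 S ψ) := by
        rw [hH, Subgroup.closure_le]
        exact fun g hg => hWgens g hg
      exact hle x.2
    have hxrange : ∀ j, j ∉ S → ∃ c, (x : ∀ i', G i') j = s (idxN hn0 j.val) j c := by
      intro j hj
      have hle : H ≤ Subgroup.comap (Pi.evalMonoidHom G j) (s (idxN hn0 j.val) j).range := by
        rw [hH, Subgroup.closure_le]
        intro g hg
        obtain ⟨i, hi, hcase⟩ := hgensElim g hg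
        have hji : j ≠ i := by rintro rfl; exact hj hi
        rcases hcase with ⟨y, hy, rfl⟩ | ⟨k, hk, b, rfl⟩
        · rw [SetLike.mem_coe, Subgroup.mem_comap]
          show Pi.mulSingle i y j ∈ _
          rw [Pi.mulSingle_eq_of_ne hji]
          exact one_mem _
        · rw [SetLike.mem_coe, Subgroup.mem_comap]
          show (Pi.mulSingle i (s (idxN hn0 k.val) i b) *
            Pi.mulSingle k (s (idxN hn0 k.val) k b⁻¹)) j ∈ _
          by_cases hjk : j = k
          · subst hjk
            rw [Pi.mul_apply, Pi.mulSingle_eq_of_ne hji, Pi.mulSingle_eq_same, one_mul]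
            exact ⟨b⁻¹, rfl⟩
          · rw [Pi.mul_apply, Pi.mulSingle_eq_of_ne hji, Pi.mulSingle_eq_of_ne hjk, one_mul]
            exact one_mem _
      obtain ⟨c, hc⟩ := hle x.2
      exact ⟨c, hc.symm⟩
    have hoff : ∀ j, j ∉ S → (x : ∀ i', G i') j = 1 := by
      intro j hj
      obtain ⟨c, hc⟩ := hxrange j hj
      have h1 : W φ hn0 S ψ (x : ∀ i', G i') =
          ∏ j' ∈ Sᶜ, Pi.mulSingle (idxN hn0 j'.val)
            ((φ j' ((x : ∀ i', G i') j')) (idxN hn0 j'.val)) := by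
        rw [W_apply]
        have h2 : ∀ i ∈ S, ψ i (φ i ((x : ∀ i', G i') i)) = 1 := by
          intro i hi
          rw [hx1 i hi, map_one, map_one]
        rw [Finset.prod_congr rfl h2, Finset.prod_const_one, mul_one]
      have h3 : (1 : ∀ j'', A j'') (idxN hn0 j.val) =
          (∏ j' ∈ Sᶜ, Pi.mulSingle (idxN hn0 j'.val)
            ((φ j' ((x : ∀ i', G i') j')) (idxN hn0 j'.val))) (idxN hn0 j.val) := by
        rw [← h1, hWx]
      rw [Finset.prod_apply, Finset.prod_eq_single_of_mem j (Finset.mem_compl.mpr hj)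
        (fun j' hj' hjj => by
          have hne : idxN hn0 j.val ≠ idxN hn0 j'.val := fun h =>
            hjj (hinjN j' j (Finset.mem_compl.mp hj') hj h.symm)
          exact Pi.mulSingle_eq_of_ne hne _)] at h3
      rw [Pi.mulSingle_eq_same, Pi.one_apply] at h3
      rw [hc, hs] at h3
      rw [hc, ← h3, map_one]
    refine Subtype.ext (funext fun i' => ?_)
    by_cases hi' : i' ∈ S
    · exact hx1 i' hi'
    · exact hoff i' hi'
  exact ⟨MulEquiv.ofBijective f ⟨hfinj, hfsurj⟩, fun x i => rfl⟩

end


theorem stmt_4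
    (n : ℕ) (hn : 3 ≤ n)
    (A : Fin n → Type) [∀ j, CommGroup (A j)] [∀ j, Nontrivial (A j)]
    [∀ j, Module.Free ℤ (Additive (A j))] [∀ j, Module.Finite ℤ (Additive (A j))]
    (G : Fin (2 * n) → Type) [∀ i, Group (G i)]
    (φ : ∀ i, G i →* (∀ j, A j)) (hφ : ∀ i, Function.Surjective (φ i))
    (s : ∀ (j : Fin n) (i : Fin (2 * n)), A j →* G i)
    (hs : ∀ j i a, φ i (s j i a) j = a)
    (Φ : (∀ i, G i) →* (∀ j, A j)) (hΦ : ∀ g, Φ g = ∏ i, φ i (g i))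
    (Y : ∀ i, Set (G i)) (hYfin : ∀ i, (Y i).Finite)
    (hYker : ∀ i, ∀ y ∈ Y i, φ i y = 1)
    (hYgen : ∀ i, Subgroup.closure (Y i ∪ ⋃ j, Set.range (s j i)) = ⊤)
    (p : ℕ) (hp : p < 6) :
    ∃ e : ↥(Subgroup.closure (⋃ i ∈ (alphaF n p ∪ alphaF n ((p + 1) % 6) ∪ alphaF n ((p + 2) % 6)),
            (Ybar Y i ∪ ⋃ j ∈ (alphaF n p ∪ alphaF n ((p + 1) % 6) ∪ alphaF n ((p + 2) % 6))ᶜ,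
              Zbar s (idxN (by omega : 0 < n) j.val) i j)))
          ≃* (∀ i : ↥(alphaF n p ∪ alphaF n ((p + 1) % 6) ∪ alphaF n ((p + 2) % 6)), G i.1),
      ∀ x (i : ↥(alphaF n p ∪ alphaF n ((p + 1) % 6) ∪ alphaF n ((p + 2) % 6))),
        e x i = (x : ∀ i', G i') i.1 := by
  have hn0 : 0 < n := by omega
  exact main_aux (A := A) (G := G) hn0 φ hφ s hs Y hYker hYgen
    (alphaF n p ∪ alphaF n ((p + 1) % 6) ∪ alphaF n ((p + 2) % 6))
    (idxN_surj hn p hp hn0) (idxN_inj hn p hp hn0)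

end SB
end

section
/- Let p ∈ {1,…,6}, let σ = {p, p+1} with entries reduced mod 6 to representatives in {1,…,6}, and let t be the unique element of {1,2,3} that is congruent mod 3 to neither p nor p+1. Then the standard face subgroup A^tG^σ = ⟨⋃_{i∈α_σ}( Ȳ_i ∪ ⋃_{j∈α_σ^c} Z̄^{j*}_{i,j} )⟩ of Ker(Φ) is isomorphic, as a group, to (∏_{j∈α_t} A_j) × ∏_{i∈α_σ} G_i. -/
namespace SB

/-! ### Arithmetic lemmas -/

lemma ar1 (n p t : ℕ) (hn : 3 ≤ n) (hp : p < 6) (ht : t < 3)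
    (ht1 : t ≠ p % 3) (ht2 : t ≠ (p + 1) % 3) (x : ℕ) (hx : x < n) :
    ¬(((cc n p ≤ x ∧ x < cc n (p+1)) ∨ (cc n ((p+1)%6) ≤ x ∧ x < cc n ((p+1)%6+1)))
      ∧ ((cc n p ≤ x+n ∧ x+n < cc n (p+1)) ∨ (cc n ((p+1)%6) ≤ x+n ∧ x+n < cc n ((p+1)%6+1)))) := by
  interval_cases p <;> interval_cases t <;> simp_all [cc] <;> omega

lemma ar2 (n p t : ℕ) (hn : 3 ≤ n) (hp : p < 6) (ht : t < 3)
    (ht1 : t ≠ p % 3) (ht2 : t ≠ (p + 1) % 3) (x : ℕ) (hx : x < n) :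
    ((¬((cc n p ≤ x ∧ x < cc n (p+1)) ∨ (cc n ((p+1)%6) ≤ x ∧ x < cc n ((p+1)%6+1))))
      ∧ ¬((cc n p ≤ x+n ∧ x+n < cc n (p+1)) ∨ (cc n ((p+1)%6) ≤ x+n ∧ x+n < cc n ((p+1)%6+1))))
    ↔ (cc n t ≤ x ∧ x < cc n (t+1)) := by
  interval_cases p <;> interval_cases t <;> simp_all [cc] <;> omega

lemma ar3 (n p : ℕ) (hn : 3 ≤ n) (hp : p < 6) :
    cc n p < cc n (p+1) ∧ cc n p < 2 * n := by
  interval_cases p <;> simp [cc] <;> omega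

/-! ### Coordinates -/

/-- The lower coordinate of class `j`. -/
def loC {n : ℕ} (j : Fin n) : Fin (2 * n) := ⟨j.val, by have := j.isLt; omega⟩

/-- The upper coordinate of class `j`. -/
def hiC {n : ℕ} (j : Fin n) : Fin (2 * n) := ⟨j.val + n, by have := j.isLt; omega⟩

lemma idxN_loC {n : ℕ} (hn : 0 < n) (j : Fin n) : idxN hn (loC j).val = j := by
  apply Fin.ext; simp [idxN, loC, Nat.mod_eq_of_lt j.isLt]

lemma idxN_hiC {n : ℕ} (hn : 0 < n) (j : Fin n) : idxN hn (hiC j).val = j := by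
  apply Fin.ext
  simp [idxN, hiC, Nat.add_mod_right, Nat.mod_eq_of_lt j.isLt]

lemma coord_split {n : ℕ} (hn : 0 < n) (k : Fin (2 * n)) :
    k = loC (idxN hn k.val) ∨ k = hiC (idxN hn k.val) := by
  rcases lt_or_ge k.val n with h | h
  · left; apply Fin.ext; simp [loC, idxN, Nat.mod_eq_of_lt h]
  · right; apply Fin.ext
    have h2 := k.isLt
    have h3 : k.val % n = k.val - n := by
      rw [Nat.mod_eq_sub_mod h, Nat.mod_eq_of_lt (by omega)]
    simp only [hiC, idxN]
    omega

lemma loC_inj {n : ℕ} {a b : Fin n} (h : loC a = loC b) : a = b := by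
  have := congrArg (fun x : Fin (2 * n) => x.val) h
  simp only [loC] at this
  exact Fin.ext this

lemma hiC_inj {n : ℕ} {a b : Fin n} (h : hiC a = hiC b) : a = b := by
  have := congrArg (fun x : Fin (2 * n) => x.val) h
  simp only [hiC] at this
  exact Fin.ext (by omega)

lemma loC_ne_hiC {n : ℕ} (a b : Fin n) : loC a ≠ hiC b := by
  intro h
  have h2 := congrArg (fun x : Fin (2 * n) => x.val) h
  have := a.isLt
  simp only [loC, hiC] at h2
  omega

/-! ### The section endomorphism and its inverse -/

section Aux
variable {n : ℕ} {A : Fin n → Type} [∀ j, CommGroup (A j)]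
  [∀ j, Module.Finite ℤ (Additive (A j))]
  {G : Fin (2 * n) → Type} [∀ i, Group (G i)]
  (φ : ∀ i, G i →* (∀ j, A j)) (s : ∀ (j : Fin n) (i : Fin (2 * n)), A j →* G i)

/-- The combined section endomorphism `U_i` of `L = ∏ A j`. -/
def Umap (i : Fin (2 * n)) : (∀ j, A j) →* (∀ j, A j) :=
  ∏ k : Fin n, ((φ i).comp ((s k i).comp (Pi.evalMonoidHom A k)))

omit [∀ j, Module.Finite ℤ (Additive (A j))] in
lemma Umap_single (i : Fin (2 * n)) (k : Fin n) (a : A k) :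
    Umap φ s i (Pi.mulSingle k a) = φ i (s k i a) := by
  classical
  rw [Umap, MonoidHom.finset_prod_apply]
  rw [Fintype.prod_eq_single k]
  · simp
  · intro k' hk'
    simp [Pi.mulSingle_eq_of_ne hk']

omit [∀ j, Module.Finite ℤ (Additive (A j))] in
lemma Umap_surjective (i : Fin (2 * n)) (hφ : Function.Surjective (φ i))
    (Y : Set (G i)) (hYker : ∀ y ∈ Y, φ i y = 1)
    (hYgen : Subgroup.closure (Y ∪ ⋃ j, Set.range (s j i)) = ⊤) :
    Function.Surjective (Umap φ s i) := by
  rw [← MonoidHom.range_eq_top, ← top_le_iff]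
  have h1 : Subgroup.map (φ i) ⊤ = ⊤ := by
    rw [Subgroup.map_top_of_surjective _ hφ]
  rw [← h1, ← hYgen, MonoidHom.map_closure]
  rw [Subgroup.closure_le]
  rintro x ⟨g, hg, rfl⟩
  rcases hg with hg | hg
  · simp only [SetLike.mem_coe, hYker g hg]
    exact ⟨1, map_one _⟩
  · rw [Set.mem_iUnion] at hg
    rcases hg with ⟨k, a, rfl⟩
    exact ⟨Pi.mulSingle k a, Umap_single φ s i k a⟩

lemma exists_V (i : Fin (2 * n)) (hφ : Function.Surjective (φ i))
    (Y : Set (G i)) (hYker : ∀ y ∈ Y, φ i y = 1)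
    (hYgen : Subgroup.closure (Y ∪ ⋃ j, Set.range (s j i)) = ⊤) :
    ∃ V : (∀ j, A j) →* (∀ j, A j), ∀ k a, V (φ i (s k i a)) = Pi.mulSingle k a := by
  have hsurj := Umap_surjective φ s i hφ Y hYker hYgen
  have hinj : Function.Injective (Umap φ s i) := by
    let U' : (∀ j, Additive (A j)) →+ (∀ j, Additive (A j)) :=
      { toFun := fun x => Umap φ s i x
        map_zero' := (Umap φ s i).map_one
        map_add' := fun x y => (Umap φ s i).map_mul x y }
    have hU'surj : Function.Surjective U' := hsurj
    have := OrzechProperty.injective_of_surjective_endomorphism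
      (U'.toIntLinearMap) hU'surj
    exact this
  let e := MulEquiv.ofBijective (Umap φ s i) ⟨hinj, hsurj⟩
  refine ⟨e.symm.toMonoidHom, fun k a => ?_⟩
  have h2 : e (Pi.mulSingle k a) = φ i (s k i a) := Umap_single φ s i k a
  simp [← h2]

end Aux

/-! ### Main theorem -/

theorem stmt_5
    (n : ℕ) (hn : 3 ≤ n)
    (A : Fin n → Type) [∀ j, CommGroup (A j)] [∀ j, Nontrivial (A j)]
    [∀ j, Module.Free ℤ (Additive (A j))] [∀ j, Module.Finite ℤ (Additive (A j))]
    (G : Fin (2 * n) → Type) [∀ i, Group (G i)]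
    (φ : ∀ i, G i →* (∀ j, A j)) (hφ : ∀ i, Function.Surjective (φ i))
    (s : ∀ (j : Fin n) (i : Fin (2 * n)), A j →* G i)
    (hs : ∀ j i a, φ i (s j i a) j = a)
    (Φ : (∀ i, G i) →* (∀ j, A j)) (hΦ : ∀ g, Φ g = ∏ i, φ i (g i))
    (Y : ∀ i, Set (G i)) (hYfin : ∀ i, (Y i).Finite)
    (hYker : ∀ i, ∀ y ∈ Y i, φ i y = 1)
    (hYgen : ∀ i, Subgroup.closure (Y i ∪ ⋃ j, Set.range (s j i)) = ⊤)
    (p : ℕ) (hp : p < 6) (t : ℕ) (ht : t < 3)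
    (ht1 : t ≠ p % 3) (ht2 : t ≠ (p + 1) % 3) :
    Nonempty
      (↥(Subgroup.closure (⋃ i ∈ (alphaF n p ∪ alphaF n ((p + 1) % 6)),
            (Ybar Y i ∪ ⋃ j ∈ (alphaF n p ∪ alphaF n ((p + 1) % 6))ᶜ,
              Zbar s (idxN (by omega : 0 < n) j.val) i j)))
        ≃* ((∀ j : ↥(alphaN n t), A j.1) × (∀ i : ↥(alphaF n p ∪ alphaF n ((p + 1) % 6)), G i.1))) := by
  classical
  have hn0 : 0 < n := by omega
  set σF : Finset (Fin (2 * n)) := alphaF n p ∪ alphaF n ((p + 1) % 6) with hσF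
  set S : Set (∀ i, G i) := (⋃ i ∈ σF,
      (Ybar Y i ∪ ⋃ j ∈ σFᶜ, Zbar s (idxN hn0 j.val) i j)) with hSdef
  set H : Subgroup (∀ i, G i) := Subgroup.closure S with hH
  -- membership characterization for σF
  have memσ : ∀ k : Fin (2 * n), k ∈ σF ↔
      ((cc n p ≤ k.val ∧ k.val < cc n (p+1)) ∨
        (cc n ((p+1)%6) ≤ k.val ∧ k.val < cc n ((p+1)%6+1))) := by
    intro k
    simp [hσF, alphaF, Finset.mem_union, Finset.mem_filter]
  have memN : ∀ j : Fin n, j ∈ alphaN n t ↔ (cc n t ≤ j.val ∧ j.val < cc n (t+1)) := by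
    intro j; simp [alphaN, Finset.mem_filter]
  -- combinatorial facts
  have hboth : ∀ j : Fin n, j ∈ alphaN n t ↔ (loC j ∉ σF ∧ hiC j ∉ σF) := by
    intro j
    rw [memN, memσ, memσ, ← ar2 n p t hn hp ht ht1 ht2 j.val j.isLt]
    rfl
  have hone : ∀ j : Fin n, loC j ∉ σF ∨ hiC j ∉ σF := by
    intro j
    have := ar1 n p t hn hp ht ht1 ht2 j.val j.isLt
    by_contra hcon
    push_neg at hcon
    exact ar1 n p t hn hp ht ht1 ht2 j.val j.isLt
      ⟨(memσ _).mp hcon.1, (memσ _).mp hcon.2⟩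
  -- choose the retractions V i
  choose V hV using fun i => exists_V φ s i (hφ i) (Y i) (hYker i) (hYgen i)
  -- the three homomorphisms
  set θ : (∀ i, G i) →* (∀ i : ↥σF, G i.1) :=
    Pi.monoidHom (fun i : ↥σF => Pi.evalMonoidHom G i.1) with hθdef
  set Ψ₁ : (∀ i, G i) →* (∀ j : ↥(alphaN n t), A j.1) :=
    Pi.monoidHom (fun j : ↥(alphaN n t) =>
      (Pi.evalMonoidHom A j.1).comp (((V (hiC j.1)).comp (φ (hiC j.1))).comp
        (Pi.evalMonoidHom G (hiC j.1)))) with hΨdef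
  set χ : (∀ i, G i) →* (∀ j, A j) :=
    ∏ k : Fin (2*n), (V k).comp ((φ k).comp (Pi.evalMonoidHom G k)) with hχdef
  have θ_apply : ∀ g (i : ↥σF), θ g i = g i.1 := fun g i => rfl
  have Ψ₁_apply : ∀ g (j : ↥(alphaN n t)),
      Ψ₁ g j = V (hiC j.1) (φ (hiC j.1) (g (hiC j.1))) j.1 := fun g j => rfl
  have χ_apply : ∀ g, χ g = ∏ k, V k (φ k (g k)) := by
    intro g
    rw [hχdef, MonoidHom.finset_prod_apply]
    rfl
  have θ_single_mem : ∀ (i : Fin (2*n)) (hi : i ∈ σF) (x : G i),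
      θ (Pi.mulSingle i x) = Pi.mulSingle (⟨i, hi⟩ : ↥σF) x := by
    intro i hi x
    funext k
    rw [θ_apply]
    by_cases h : k = (⟨i, hi⟩ : ↥σF)
    · subst h
      simp
    · rw [Pi.mulSingle_eq_of_ne (fun hc : k.1 = i => h (Subtype.ext hc)),
        Pi.mulSingle_eq_of_ne h]
  have θ_single_not : ∀ (k : Fin (2*n)), k ∉ σF → ∀ (x : G k),
      θ (Pi.mulSingle k x) = 1 := by
    intro k hk x
    funext i
    rw [θ_apply]
    rw [Pi.mulSingle_eq_of_ne (fun hc : i.1 = k => hk (hc ▸ i.2))]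
    rfl
  have χ_single : ∀ (m : Fin (2*n)) (x : G m), χ (Pi.mulSingle m x) = V m (φ m x) := by
    intro m x
    rw [χ_apply]
    rw [Fintype.prod_eq_single m (fun k hk => by rw [Pi.mulSingle_eq_of_ne hk]; simp),
      Pi.mulSingle_eq_same]
  -- generators of H
  have hYbar_mem : ∀ (i : Fin (2*n)), i ∈ σF → ∀ y ∈ Y i, Pi.mulSingle i y ∈ H := by
    intro i hi y hy
    rw [hH]
    apply Subgroup.subset_closure
    exact Set.mem_biUnion hi (Or.inl ⟨y, hy, rfl⟩)
  have hZbar_mem : ∀ (i : Fin (2*n)), i ∈ σF → ∀ (k : Fin (2*n)), k ∉ σF →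
      ∀ (j : Fin n), idxN hn0 k.val = j → ∀ b : A j,
      Pi.mulSingle i (s j i b) * Pi.mulSingle k (s j k b⁻¹) ∈ H := by
    intro i hi k hk j hj b
    subst hj
    rw [hH]
    apply Subgroup.subset_closure
    refine Set.mem_biUnion hi (Or.inr ?_)
    exact Set.mem_biUnion (Finset.mem_compl.mpr hk) ⟨b, rfl⟩
  have hHle : ∀ (K : Subgroup (∀ i, G i)),
      (∀ i ∈ σF, ∀ y ∈ Y i, Pi.mulSingle i y ∈ K) →
      (∀ i ∈ σF, ∀ (k : Fin (2*n)), k ∉ σF → ∀ b : A (idxN hn0 k.val),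
        Pi.mulSingle i (s (idxN hn0 k.val) i b) *
          Pi.mulSingle k (s (idxN hn0 k.val) k b⁻¹) ∈ K) →
      H ≤ K := by
    intro K h1 h2
    rw [hH]
    rw [Subgroup.closure_le]
    intro g hg
    simp only [hSdef, Set.mem_iUnion, Set.mem_union, Ybar, Zbar, Set.mem_image,
      Set.mem_range] at hg
    obtain ⟨i, hi, hg⟩ := hg
    rcases hg with ⟨y, hy, rfl⟩ | ⟨k, hk, b, rfl⟩
    · exact h1 i hi y hy
    · exact h2 i hi k (Finset.mem_compl.mp hk) b
  -- the support subgroup Q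
  set Q : Subgroup (∀ i, G i) :=
    { carrier := {g | ∀ k, k ∉ σF → ∃ a : A (idxN hn0 k.val), s (idxN hn0 k.val) k a = g k}
      one_mem' := fun k _ => ⟨1, by simp⟩
      mul_mem' := by
        intro a b ha hb k hk
        obtain ⟨x, hx⟩ := ha k hk
        obtain ⟨y, hy⟩ := hb k hk
        exact ⟨x * y, by rw [map_mul, hx, hy]; rfl⟩
      inv_mem' := by
        intro a ha k hk
        obtain ⟨x, hx⟩ := ha k hk
        exact ⟨x⁻¹, by rw [map_inv, hx]; rfl⟩ } with hQdef
  have hHQ : H ≤ Q := by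
    apply hHle
    · intro i hi y hy k hk
      have hik : k ≠ i := fun hc => hk (hc ▸ hi)
      exact ⟨1, by rw [map_one, Pi.mulSingle_eq_of_ne hik]⟩
    · intro i hi k hk b k' hk'
      have hik' : k' ≠ i := fun hc => hk' (hc ▸ hi)
      by_cases h : k' = k
      · subst h
        exact ⟨b⁻¹, by rw [Pi.mul_apply, Pi.mulSingle_eq_of_ne hik', Pi.mulSingle_eq_same,
          one_mul]⟩
      · exact ⟨1, by rw [map_one, Pi.mul_apply, Pi.mulSingle_eq_of_ne hik',
          Pi.mulSingle_eq_of_ne h, one_mul]⟩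
  -- χ vanishes on H
  have hHχ : ∀ h ∈ H, χ h = 1 := by
    have : H ≤ χ.ker := by
      apply hHle
      · intro i hi y hy
        rw [MonoidHom.mem_ker, χ_single, hYker i y hy, map_one]
      · intro i hi k hk b
        rw [MonoidHom.mem_ker, map_mul, χ_single, χ_single, hV]
        simp [hV]
    exact fun h hh => this hh
  have hlohi : ∀ j : Fin n, loC j ≠ hiC j := by
    intro j hc
    have := congrArg Fin.val hc
    simp only [loC, hiC] at this
    omega
  -- injectivity
  have hinj : ∀ h ∈ H, Ψ₁ h = 1 → θ h = 1 → h = 1 := by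
    intro h hh h1 h2
    have hθk : ∀ k, k ∈ σF → h k = 1 := by
      intro k hk
      exact congrFun h2 (⟨k, hk⟩ : ↥σF)
    have hval : ∀ (k : Fin (2*n)) (j : Fin n), idxN hn0 k.val = j →
        ∃ a : A j, s j k a = h k ∧ V k (φ k (h k)) = Pi.mulSingle j a := by
      intro k j hj
      subst hj
      by_cases hk : k ∈ σF
      · exact ⟨1, by simp [hθk k hk], by simp [hθk k hk]⟩
      · obtain ⟨a, ha⟩ := hHQ hh k hk
        exact ⟨a, ha, by rw [← ha, hV]⟩
    have hχh : χ h = 1 := hHχ h hh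
    have hprod : ∀ j : Fin n,
        (V (loC j) (φ (loC j) (h (loC j)))) j *
          (V (hiC j) (φ (hiC j) (h (hiC j)))) j = 1 := by
      intro j
      have e0 : (χ h) j = 1 := by rw [hχh]; rfl
      rw [χ_apply, Finset.prod_apply] at e0
      have e1 : ∀ k : Fin (2*n), k ∈ Finset.univ →
          k ∉ ({loC j, hiC j} : Finset (Fin (2*n))) → (V k (φ k (h k))) j = 1 := by
        intro k _ hk
        obtain ⟨a, _, hFa⟩ := hval k (idxN hn0 k.val) rfl
        rw [hFa]
        have hne : j ≠ idxN hn0 k.val := by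
          intro hc
          rcases coord_split hn0 k with hcs | hcs <;> rw [← hc] at hcs <;>
            simp [hcs] at hk
        exact Pi.mulSingle_eq_of_ne hne _
      rw [← Finset.prod_subset (Finset.subset_univ ({loC j, hiC j} : Finset (Fin (2*n)))) e1]
        at e0
      rwa [Finset.prod_insert (by simp [hlohi j]), Finset.prod_singleton] at e0
    have hclass : ∀ j : Fin n, h (loC j) = 1 ∧ h (hiC j) = 1 := by
      intro j
      obtain ⟨alo, halo, hFlo⟩ := hval (loC j) j (idxN_loC hn0 j)
      obtain ⟨ahi, hahi, hFhi⟩ := hval (hiC j) j (idxN_hiC hn0 j)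
      have hpj := hprod j
      rw [hFlo, hFhi, Pi.mulSingle_eq_same, Pi.mulSingle_eq_same] at hpj
      by_cases hjt : j ∈ alphaN n t
      · have hΨj : Ψ₁ h ⟨j, hjt⟩ = 1 := congrFun h1 (⟨j, hjt⟩ : ↥(alphaN n t))
        have hahi1 : ahi = 1 := by
          have := (Ψ₁_apply h ⟨j, hjt⟩).symm.trans hΨj
          rwa [hFhi, Pi.mulSingle_eq_same] at this
        have halo1 : alo = 1 := by rwa [hahi1, mul_one] at hpj
        exact ⟨by rw [← halo, halo1, map_one], by rw [← hahi, hahi1, map_one]⟩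
      · have hcase : loC j ∈ σF ∨ hiC j ∈ σF := by
          by_contra hc
          push_neg at hc
          exact hjt ((hboth j).mpr ⟨hc.1, hc.2⟩)
        rcases hcase with hlo | hhi
        · have h1' : h (loC j) = 1 := hθk _ hlo
          have halo1 : alo = 1 := by
            have hx := hFlo
            rw [h1', map_one, map_one] at hx
            have := congrFun hx.symm j
            rwa [Pi.mulSingle_eq_same] at this
          have hahi1 : ahi = 1 := by rwa [halo1, one_mul] at hpj
          exact ⟨h1', by rw [← hahi, hahi1, map_one]⟩
        · have h1' : h (hiC j) = 1 := hθk _ hhi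
          have hahi1 : ahi = 1 := by
            have hx := hFhi
            rw [h1', map_one, map_one] at hx
            have := congrFun hx.symm j
            rwa [Pi.mulSingle_eq_same] at this
          have halo1 : alo = 1 := by rwa [hahi1, mul_one] at hpj
          exact ⟨by rw [← halo, halo1, map_one], h1'⟩
    funext k
    rcases coord_split hn0 k with hcs | hcs
    · rw [hcs]; exact (hclass _).1
    · rw [hcs]; exact (hclass _).2
  -- a base point in σF
  obtain ⟨hccp, hccp2⟩ := ar3 n p hn hp
  set i₀ : Fin (2*n) := ⟨cc n p, hccp2⟩ with hi₀def
  have hi₀mem : i₀ ∈ σF := (memσ _).mpr (Or.inl ⟨le_refl _, hccp⟩)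
  have hex : ∀ j : Fin n, ∃ κ : Fin (2*n), κ ∉ σF ∧ idxN hn0 κ.val = j := by
    intro j
    rcases hone j with h | h
    · exact ⟨loC j, h, idxN_loC hn0 j⟩
    · exact ⟨hiC j, h, idxN_hiC hn0 j⟩
  -- θ is surjective on H
  have hmapθ : ∀ (i : Fin (2*n)) (hi : i ∈ σF) (x : G i),
      Pi.mulSingle (⟨i, hi⟩ : ↥σF) x ∈ H.map θ := by
    intro i hi x
    have key : (⊤ : Subgroup (G i)) ≤
        Subgroup.comap (MonoidHom.mulSingle (fun i : ↥σF => G i.1) ⟨i, hi⟩) (H.map θ) := by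
      rw [← hYgen i, Subgroup.closure_le]
      intro g hg
      rcases hg with hg | hg
      · simp only [SetLike.mem_coe, Subgroup.mem_comap]
        refine Subgroup.mem_map.mpr ⟨Pi.mulSingle i g, hYbar_mem i hi g hg, ?_⟩
        exact θ_single_mem i hi g
      · rw [Set.mem_iUnion] at hg
        obtain ⟨k, a, rfl⟩ := hg
        obtain ⟨κ, hκ, hκidx⟩ := hex k
        simp only [SetLike.mem_coe, Subgroup.mem_comap]
        refine Subgroup.mem_map.mpr
          ⟨Pi.mulSingle i (s k i a) * Pi.mulSingle κ (s k κ a⁻¹),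
            hZbar_mem i hi κ hκ k hκidx a, ?_⟩
        rw [map_mul, θ_single_mem i hi, θ_single_not κ hκ, mul_one]
        rfl
    exact key (Subgroup.mem_top x)
  have hθsurj : ∀ gg : (∀ i : ↥σF, G i.1), ∃ h ∈ H, θ h = gg := by
    intro gg
    have hmem : gg ∈ H.map θ := by
      rw [← Finset.noncommProd_mulSingle gg]
      apply Subgroup.noncommProd_mem
      intro i _
      exact hmapθ i.1 i.2 (gg i)
    obtain ⟨h, hh, hθh⟩ := Subgroup.mem_map.mp hmem
    exact ⟨h, hh, hθh⟩
  -- diagonal elements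
  have hd_mem : ∀ (j : Fin n), j ∈ alphaN n t → ∀ c : A j,
      Pi.mulSingle (loC j) (s j (loC j) c⁻¹) * Pi.mulSingle (hiC j) (s j (hiC j) c) ∈ H := by
    intro j hjt c
    obtain ⟨hlo, hhi⟩ := (hboth j).mp hjt
    have hne1 : loC j ≠ i₀ := fun hc => hlo (hc ▸ hi₀mem)
    have hne2 : hiC j ≠ i₀ := fun hc => hhi (hc ▸ hi₀mem)
    have heq : Pi.mulSingle (loC j) (s j (loC j) c⁻¹) * Pi.mulSingle (hiC j) (s j (hiC j) c)
        = (Pi.mulSingle i₀ (s j i₀ c) * Pi.mulSingle (loC j) (s j (loC j) c⁻¹)) *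
          (Pi.mulSingle i₀ (s j i₀ c) * Pi.mulSingle (hiC j) (s j (hiC j) c⁻¹))⁻¹ := by
      funext k
      simp only [Pi.mul_apply, Pi.inv_apply, mul_inv_rev]
      rcases eq_or_ne k i₀ with rfl | h1
      · simp [Pi.mulSingle_eq_of_ne (Ne.symm hne1), Pi.mulSingle_eq_of_ne (Ne.symm hne2)]
      · rcases eq_or_ne k (loC j) with rfl | h2
        · simp [Pi.mulSingle_eq_of_ne (loC_ne_hiC j j), Pi.mulSingle_eq_of_ne hne1]
        · rcases eq_or_ne k (hiC j) with rfl | h3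
          · simp [Pi.mulSingle_eq_of_ne (Ne.symm (loC_ne_hiC j j)),
              Pi.mulSingle_eq_of_ne hne2, map_inv]
          · simp [Pi.mulSingle_eq_of_ne h1, Pi.mulSingle_eq_of_ne h2,
              Pi.mulSingle_eq_of_ne h3]
    rw [heq]
    exact mul_mem (hZbar_mem i₀ hi₀mem (loC j) hlo j (idxN_loC hn0 j) c)
      (inv_mem (hZbar_mem i₀ hi₀mem (hiC j) hhi j (idxN_hiC hn0 j) c))
  -- the homomorphism δA
  have hδA : ∃ δA : (∀ j : ↥(alphaN n t), A j.1) →* (∀ i, G i),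
      ∀ (j : ↥(alphaN n t)) (c : A j.1),
        δA (Pi.mulSingle j c) =
          Pi.mulSingle (loC j.1) (s j.1 (loC j.1) c⁻¹) *
            Pi.mulSingle (hiC j.1) (s j.1 (hiC j.1) c) := by
    refine ⟨Pi.monoidHom (fun k : Fin (2*n) =>
      if h1 : ∃ j : ↥(alphaN n t), loC j.1 = k then
        (s h1.choose.1 k).comp (invMonoidHom.comp
          (Pi.evalMonoidHom (fun j : ↥(alphaN n t) => A j.1) h1.choose))
      else if h2 : ∃ j : ↥(alphaN n t), hiC j.1 = k then
        (s h2.choose.1 k).comp (Pi.evalMonoidHom (fun j : ↥(alphaN n t) => A j.1) h2.choose)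
      else 1), ?_⟩
    intro j c
    funext k
    show (if h1 : ∃ j' : ↥(alphaN n t), loC j'.1 = k then
        (s h1.choose.1 k).comp (invMonoidHom.comp
          (Pi.evalMonoidHom (fun j : ↥(alphaN n t) => A j.1) h1.choose))
      else if h2 : ∃ j' : ↥(alphaN n t), hiC j'.1 = k then
        (s h2.choose.1 k).comp (Pi.evalMonoidHom (fun j : ↥(alphaN n t) => A j.1) h2.choose)
      else 1) (Pi.mulSingle j c) = _
    by_cases h1 : ∃ j' : ↥(alphaN n t), loC j'.1 = k
    · rw [dif_pos h1]
      have hch := h1.choose_spec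
      simp only [MonoidHom.comp_apply, Pi.evalMonoidHom_apply, invMonoidHom_apply]
      generalize hgen : h1.choose = j' at *
      subst hch
      by_cases hjj : j' = j
      · subst hjj
        simp [Pi.mulSingle_eq_same, Pi.mulSingle_eq_of_ne (loC_ne_hiC j'.1 j'.1)]
      · rw [Pi.mulSingle_eq_of_ne hjj]
        simp [Pi.mulSingle_eq_of_ne (fun hc => hjj (Subtype.ext (loC_inj hc))),
          Pi.mulSingle_eq_of_ne (loC_ne_hiC j'.1 j.1)]
    · rw [dif_neg h1]
      by_cases h2 : ∃ j' : ↥(alphaN n t), hiC j'.1 = k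
      · rw [dif_pos h2]
        have hch := h2.choose_spec
        simp only [MonoidHom.comp_apply, Pi.evalMonoidHom_apply]
        generalize hgen : h2.choose = j' at *
        subst hch
        by_cases hjj : j' = j
        · subst hjj
          simp [Pi.mulSingle_eq_same, Pi.mulSingle_eq_of_ne (Ne.symm (loC_ne_hiC j'.1 j'.1))]
        · rw [Pi.mulSingle_eq_of_ne hjj]
          simp [Pi.mulSingle_eq_of_ne (Ne.symm (loC_ne_hiC j.1 j'.1)),
            Pi.mulSingle_eq_of_ne (fun hc => hjj (Subtype.ext (hiC_inj hc)))]
      · rw [dif_neg h2]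
        have hk1 : k ≠ loC j.1 := fun hc => h1 ⟨j, hc.symm⟩
        have hk2 : k ≠ hiC j.1 := fun hc => h2 ⟨j, hc.symm⟩
        rw [Pi.mul_apply, Pi.mulSingle_eq_of_ne hk1, Pi.mulSingle_eq_of_ne hk2, one_mul]
        rfl
  obtain ⟨δA, hδAs⟩ := hδA
  have hδH : ∀ a, δA a ∈ H := by
    intro a
    have : a ∈ Subgroup.comap δA H := by
      rw [← Finset.univ_prod_mulSingle a]
      apply Subgroup.prod_mem
      intro j _
      rw [Subgroup.mem_comap, hδAs]
      exact hd_mem j.1 j.2 (a j)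
    exact this
  have hθδ : ∀ a, θ (δA a) = 1 := by
    intro a
    have : a ∈ (θ.comp δA).ker := by
      rw [← Finset.univ_prod_mulSingle a]
      apply Subgroup.prod_mem
      intro j _
      rw [MonoidHom.mem_ker, MonoidHom.comp_apply, hδAs, map_mul,
        θ_single_not (loC j.1) ((hboth j.1).mp j.2).1,
        θ_single_not (hiC j.1) ((hboth j.1).mp j.2).2, mul_one]
    exact this
  have hΨδ : ∀ a, Ψ₁ (δA a) = a := by
    have hsingle : ∀ (j : ↥(alphaN n t)) (c : A j.1),
        Ψ₁ (δA (Pi.mulSingle j c)) = Pi.mulSingle j c := by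
      intro j c
      rw [hδAs]
      funext j''
      rw [Ψ₁_apply]
      rcases eq_or_ne j'' j with rfl | hne
      · rw [Pi.mul_apply, Pi.mulSingle_eq_of_ne (Ne.symm (loC_ne_hiC _ _)),
          Pi.mulSingle_eq_same, one_mul, hV, Pi.mulSingle_eq_same, Pi.mulSingle_eq_same]
      · have hv1 : hiC j''.1 ≠ loC j.1 := Ne.symm (loC_ne_hiC _ _)
        have hv2 : hiC j''.1 ≠ hiC j.1 := fun hc => hne (Subtype.ext (hiC_inj hc))
        rw [Pi.mul_apply, Pi.mulSingle_eq_of_ne hv1, Pi.mulSingle_eq_of_ne hv2, one_mul,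
          map_one, map_one, Pi.one_apply, Pi.mulSingle_eq_of_ne hne]
    intro a
    have : a ∈ ((Ψ₁.comp δA) / (MonoidHom.id _)).ker := by
      rw [← Finset.univ_prod_mulSingle a]
      apply Subgroup.prod_mem
      intro j _
      rw [MonoidHom.mem_ker, MonoidHom.div_apply, MonoidHom.comp_apply, hsingle,
        MonoidHom.id_apply, div_self']
    rw [MonoidHom.mem_ker, MonoidHom.div_apply, MonoidHom.comp_apply,
      MonoidHom.id_apply, div_eq_one] at this
    exact this
  -- assemble
  refine ⟨MulEquiv.ofBijective ((Ψ₁.comp H.subtype).prod (θ.comp H.subtype)) ⟨?_, ?_⟩⟩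
  · rw [injective_iff_map_eq_one]
    rintro ⟨h, hh⟩ hΨh
    have e1 : Ψ₁ h = 1 := congrArg Prod.fst hΨh
    have e2 : θ h = 1 := congrArg Prod.snd hΨh
    exact Subtype.ext (hinj h hh e1 e2)
  · rintro ⟨a, gg⟩
    obtain ⟨h₀, hh₀, hθ₀⟩ := hθsurj gg
    refine ⟨⟨δA (a * (Ψ₁ h₀)⁻¹) * h₀, mul_mem (hδH _) hh₀⟩, ?_⟩
    have e1 : Ψ₁ (δA (a * (Ψ₁ h₀)⁻¹) * h₀) = a := by
      rw [map_mul, hΨδ, inv_mul_cancel_right]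
    have e2 : θ (δA (a * (Ψ₁ h₀)⁻¹) * h₀) = gg := by
      rw [map_mul, hθδ, one_mul, hθ₀]
    exact Prod.ext e1 e2

end SB
end

section
/- The nonstandard face subgroup G^{14}_N = ⟨⋃_{i∈α_{14}}( Ȳ_i ∪ ⋃_{j∈α_{23}} Z̄^j_{i,j} ∪ ⋃_{j∈α_1} Z̄^j_{i, j+|α_{1234}|} )⟩ of Ker(Φ), where |α_{1234}| = n + |α_1|, is isomorphic, as a group, to ∏_{i∈α_{14}} G_i (that is, to G_{α_1} × G_{α_4}). -/
namespace SB

lemma endo_inj {B : Type} [CommGroup B] [Module.Finite ℤ (Additive B)]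
    (f : B →* B) (hf : Function.Surjective f) : Function.Injective f := by
  have hf' : Function.Surjective (MonoidHom.toAdditive f) := by
    intro x
    obtain ⟨y, hy⟩ := hf x.toMul
    exact ⟨Additive.ofMul y, congrArg Additive.ofMul hy⟩
  have hinj := OrzechProperty.injective_of_surjective_endomorphism
    ((MonoidHom.toAdditive f).toIntLinearMap) hf'
  intro a b hab
  exact congrArg Additive.toMul (hinj (congrArg Additive.ofMul hab))

lemma cc0 (n : ℕ) : cc n 0 = 0 := by simp [cc]
lemma cc1 (n : ℕ) : cc n 1 = (n + 2) / 3 := by norm_num [cc]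
lemma cc2 (n : ℕ) : cc n 2 = (2 * n + 2) / 3 := by norm_num [cc]
lemma cc3 (n : ℕ) : cc n 3 = n := by norm_num [cc]
lemma cc4 (n : ℕ) : cc n 4 = n + (n + 2) / 3 := by norm_num [cc]

lemma mem_alphaF {n p : ℕ} {x : Fin (2 * n)} :
    x ∈ alphaF n p ↔ cc n p ≤ x.val ∧ x.val < cc n (p + 1) := by simp [alphaF]

def a14 (n : ℕ) : Finset (Fin (2 * n)) := alphaF n 0 ∪ alphaF n 3

lemma mem_a14 {n : ℕ} {x : Fin (2 * n)} :
    x ∈ a14 n ↔ x.val < (n + 2) / 3 ∨ (n ≤ x.val ∧ x.val < n + (n + 2) / 3) := by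
  simp [a14, mem_alphaF, cc0, cc1, cc3, cc4]

def km {n : ℕ} (hn : 3 ≤ n) (m : Fin n) : Fin (2 * n) :=
  if h : m.val < (n + 2) / 3 then ⟨m.val + n + (n + 2) / 3, by have := m.isLt; omega⟩
  else ⟨m.val, by have := m.isLt; omega⟩

lemma km_not_mem {n : ℕ} (hn : 3 ≤ n) (m : Fin n) : km hn m ∉ a14 n := by
  have := m.isLt
  rw [mem_a14]; unfold km; split <;> simp <;> omega

def corr {n : ℕ} (hn : 3 ≤ n) (k : Fin (2 * n)) : Option (Fin n) :=
  if h : (n + 2) / 3 ≤ k.val ∧ k.val < n then some ⟨k.val, h.2⟩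
  else if h2 : n + (n + 2) / 3 ≤ k.val ∧ k.val < n + (n + 2) / 3 + (n + 2) / 3 then
    some ⟨k.val - (n + (n + 2) / 3), by omega⟩
  else none

lemma corr_km {n : ℕ} (hn : 3 ≤ n) (m : Fin n) : corr hn (km hn m) = some m := by
  have := m.isLt
  unfold corr km
  split <;> rename_i h
  · rw [dif_neg (by simp; omega), dif_pos (by simp; omega)]
    exact congrArg some (Fin.ext (by simp; omega))
  · rw [dif_pos (by simp; omega)]

lemma corr_eq_some {n : ℕ} {hn : 3 ≤ n} {k : Fin (2 * n)} {m : Fin n}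
    (h : corr hn k = some m) : k = km hn m := by
  unfold corr at h
  split_ifs at h with h1 h2 <;> injection h with h' <;> subst h' <;> unfold km
  · rw [dif_neg (by simp; omega)]
  · rw [dif_pos (by simp; omega)]
    exact Fin.ext (by simp; omega)

lemma corr_not_mem {n : ℕ} (hn : 3 ≤ n) (k : Fin (2 * n)) {m : Fin n}
    (h : corr hn k = some m) : k ∉ a14 n := (corr_eq_some h) ▸ km_not_mem hn m

section Main
variable {n : ℕ} {A : Fin n → Type} [∀ j, CommGroup (A j)]
  {G : Fin (2 * n) → Type} [∀ i, Group (G i)]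

/-- the combined correction homomorphism -/
def dee (c : ∀ i, G i →* (∀ j, A j)) : (∀ i : ↥(a14 n), G i.1) →* (∀ j, A j) :=
  ∏ i : ↥(a14 n), (c i.1).comp (Pi.evalMonoidHom (fun i' : ↥(a14 n) => G i'.1) i)

lemma dee_single (c : ∀ i, G i →* (∀ j, A j)) (i : ↥(a14 n)) (x : G i.1) :
    dee c (Pi.mulSingle i x) = c i.1 x := by
  rw [dee, MonoidHom.finset_prod_apply]
  rw [Finset.prod_eq_single_of_mem i (Finset.mem_univ _) (fun i' _ hne => by
    simp only [MonoidHom.coe_comp, Function.comp_apply, Pi.evalMonoidHom_apply]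
    rw [Pi.mulSingle_eq_of_ne hne, map_one])]
  simp

/-- the graph homomorphism -/
def sigmaH (hn : 3 ≤ n) (s : ∀ (j : Fin n) (i : Fin (2 * n)), A j →* G i)
    (c : ∀ i, G i →* (∀ j, A j)) : (∀ i : ↥(a14 n), G i.1) →* (∀ k, G k) :=
  MonoidHom.mk' (fun g k =>
    if h : k ∈ a14 n then g ⟨k, h⟩
    else (corr hn k).elim 1 (fun m => s m k ((dee c g m)⁻¹)))
  (by
    intro g g'
    funext k
    simp only [Pi.mul_apply]
    split_ifs with h
    · rfl
    · cases corr hn k with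
      | none => simp
      | some m => simp [mul_inv, mul_comm])

lemma sigmaH_apply (hn : 3 ≤ n) (s : ∀ (j : Fin n) (i : Fin (2 * n)), A j →* G i)
    (c : ∀ i, G i →* (∀ j, A j)) (g : ∀ i : ↥(a14 n), G i.1) (k : Fin (2 * n)) :
    sigmaH hn s c g k =
      if h : k ∈ a14 n then g ⟨k, h⟩
      else (corr hn k).elim 1 (fun m => s m k ((dee c g m)⁻¹)) := rfl

lemma sigmaH_injective (hn : 3 ≤ n) (s : ∀ (j : Fin n) (i : Fin (2 * n)), A j →* G i)
    (c : ∀ i, G i →* (∀ j, A j)) : Function.Injective (sigmaH hn s c) := by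
  intro g g' hgg
  funext i
  have := congrFun hgg i.1
  simpa [sigmaH, dif_pos i.2] using this

lemma sigmaH_single_Y (hn : 3 ≤ n) (s : ∀ (j : Fin n) (i : Fin (2 * n)), A j →* G i)
    (c : ∀ i, G i →* (∀ j, A j)) (i : ↥(a14 n)) (x : G i.1) (hx : c i.1 x = 1) :
    sigmaH hn s c (Pi.mulSingle i x) = Pi.mulSingle i.1 x := by
  funext k
  rw [sigmaH_apply]
  split_ifs with h
  · by_cases hk : k = i.1
    · rcases i with ⟨iv, hiv⟩
      subst hk
      simp
    · rw [Pi.mulSingle_eq_of_ne (fun e => hk (congrArg Subtype.val e)),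
        Pi.mulSingle_eq_of_ne hk]
  · rw [dee_single, hx]
    rw [Pi.mulSingle_eq_of_ne (fun e : k = i.1 => h (e ▸ i.2))]
    cases corr hn k <;> simp

lemma sigmaH_single_Z (hn : 3 ≤ n) (s : ∀ (j : Fin n) (i : Fin (2 * n)), A j →* G i)
    (c : ∀ i, G i →* (∀ j, A j)) (i : ↥(a14 n)) (m : Fin n) (b : A m)
    (hcs : c i.1 (s m i.1 b) = Pi.mulSingle m b) :
    sigmaH hn s c (Pi.mulSingle i (s m i.1 b)) =
      Pi.mulSingle i.1 (s m i.1 b) * Pi.mulSingle (km hn m) (s m (km hn m) b⁻¹) := by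
  funext k
  rw [Pi.mul_apply, sigmaH_apply]
  split_ifs with h
  · rw [Pi.mulSingle_eq_of_ne (fun e : k = km hn m => (e ▸ km_not_mem hn m) h), mul_one]
    by_cases hk : k = i.1
    · rcases i with ⟨iv, hiv⟩
      subst hk
      simp
    · rw [Pi.mulSingle_eq_of_ne (fun e => hk (congrArg Subtype.val e)),
        Pi.mulSingle_eq_of_ne hk]
  · rw [dee_single, hcs]
    rw [Pi.mulSingle_eq_of_ne (fun e : k = i.1 => h (e ▸ i.2)), one_mul]
    cases hc : corr hn k with
    | none =>
      rw [Pi.mulSingle_eq_of_ne (fun e : k = km hn m => by rw [e, corr_km] at hc; cases hc)]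
      rfl
    | some m' =>
      by_cases hm : m' = m
      · subst hm
        have hkm : k = km hn m' := corr_eq_some hc
        subst hkm
        simp
      · rw [Pi.mulSingle_eq_of_ne
          (fun e : k = km hn m => by rw [e, corr_km] at hc; exact hm (by injection hc with hinj; exact hinj.symm)),
          Option.elim, Pi.mulSingle_eq_of_ne hm, inv_one, map_one]

lemma range_eq (hn : 3 ≤ n) (s : ∀ (j : Fin n) (i : Fin (2 * n)), A j →* G i)
    (c : ∀ i, G i →* (∀ j, A j)) (Y : ∀ i, Set (G i))
    (hYgen : ∀ i, Subgroup.closure (Y i ∪ ⋃ j, Set.range (s j i)) = ⊤)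
    (hcY : ∀ i, ∀ y ∈ Y i, c i y = 1)
    (hcs : ∀ j i b, c i (s j i b) = Pi.mulSingle j b) :
    (sigmaH hn s c).range =
      Subgroup.closure (⋃ i ∈ a14 n, (Ybar Y i ∪ ⋃ m : Fin n, Zbar s m i (km hn m))) := by
  apply le_antisymm
  · rintro _ ⟨g, rfl⟩
    have hg : Finset.univ.noncommProd (fun i => Pi.mulSingle i (g i))
        (@id (((Finset.univ : Finset ↥(a14 n)) : Set ↥(a14 n)).Pairwise
          (Function.onFun Commute fun i => (Pi.mulSingle i (g i) : ∀ i' : ↥(a14 n), G i'.1))) (fun i _ j _ _ => Pi.mulSingle_apply_commute g i j)) = g := Finset.noncommProd_mulSingle g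
    rw [← hg, Finset.map_noncommProd]
    apply Subgroup.noncommProd_mem
    intro i _
    have key : ∀ x : G i.1, sigmaH hn s c (Pi.mulSingle i x) ∈
        Subgroup.closure (⋃ i ∈ a14 n, (Ybar Y i ∪ ⋃ m : Fin n, Zbar s m i (km hn m))) := by
      intro x
      have hx : x ∈ Subgroup.closure (Y i.1 ∪ ⋃ j, Set.range (s j i.1)) := by
        rw [hYgen]; exact Subgroup.mem_top x
      have hle : Subgroup.closure (Y i.1 ∪ ⋃ j, Set.range (s j i.1)) ≤
          (Subgroup.closure (⋃ i ∈ a14 n, (Ybar Y i ∪ ⋃ m : Fin n, Zbar s m i (km hn m)))).comap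
            ((sigmaH hn s c).comp (MonoidHom.mulSingle (fun i' : ↥(a14 n) => G i'.1) i)) := by
        rw [Subgroup.closure_le]
        rintro z (hz | hz)
        · rw [SetLike.mem_coe, Subgroup.mem_comap, MonoidHom.comp_apply,
            MonoidHom.mulSingle_apply, sigmaH_single_Y hn s c i z (hcY _ _ hz)]
          exact Subgroup.subset_closure
            (Set.mem_biUnion i.2 (Or.inl ⟨z, hz, rfl⟩))
        · simp only [Set.mem_iUnion, Set.mem_range] at hz
          obtain ⟨j, b, rfl⟩ := hz
          rw [SetLike.mem_coe, Subgroup.mem_comap, MonoidHom.comp_apply,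
            MonoidHom.mulSingle_apply, sigmaH_single_Z hn s c i j b (hcs _ _ _)]
          refine Subgroup.subset_closure (Set.mem_biUnion i.2 (Or.inr ?_))
          exact Set.mem_iUnion.2 ⟨j, ⟨b, rfl⟩⟩
      have := hle hx
      rwa [Subgroup.mem_comap, MonoidHom.comp_apply, MonoidHom.mulSingle_apply] at this
    exact key _
  · rw [Subgroup.closure_le]
    intro z hz
    simp only [Set.mem_iUnion] at hz
    obtain ⟨i, hi, hz⟩ := hz
    rcases hz with ⟨y, hy, rfl⟩ | hz
    · exact ⟨Pi.mulSingle ⟨i, hi⟩ y, sigmaH_single_Y hn s c ⟨i, hi⟩ y (hcY _ _ hy)⟩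
    · simp only [Set.mem_iUnion, Zbar, Set.mem_range] at hz
      obtain ⟨m, b, rfl⟩ := hz
      exact ⟨Pi.mulSingle ⟨i, hi⟩ (s m i b), sigmaH_single_Z hn s c ⟨i, hi⟩ m b (hcs _ _ _)⟩

lemma km_val_high {hn : 3 ≤ n} {m : Fin n} (h1 : (n + 2) / 3 ≤ m.val) :
    (km hn m).val = m.val := by
  rw [km, dif_neg (by omega)]

lemma km_val_low {hn : 3 ≤ n} {m : Fin n} (h1 : m.val < (n + 2) / 3) :
    (km hn m).val = m.val + n + (n + 2) / 3 := by
  rw [km, dif_pos h1]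

lemma S_eq (hn : 3 ≤ n) (h0 : 0 < n) (s : ∀ (j : Fin n) (i : Fin (2 * n)), A j →* G i)
    (Y : ∀ i, Set (G i)) :
    (⋃ i ∈ (alphaF n 0 ∪ alphaF n 3),
        (Ybar Y i
          ∪ (⋃ j ∈ alphaF n 1 ∪ alphaF n 2, Zbar s (idxN h0 j.val) i j)
          ∪ ⋃ j ∈ alphaF n 0,
              Zbar s (idxN h0 j.val) i (idx h0 (j.val + (n + cc n 1)))))
      = ⋃ i ∈ a14 n, (Ybar Y i ∪ ⋃ m : Fin n, Zbar s m i (km hn m)) := by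
  rw [show alphaF n 0 ∪ alphaF n 3 = a14 n from rfl]
  refine Set.iUnion₂_congr fun i _ => ?_
  rw [Set.union_assoc]
  refine congrArg (Ybar Y i ∪ ·) ?_
  ext x
  simp only [Set.mem_union, Set.mem_iUnion]
  constructor
  · rintro (⟨j, hj, hx⟩ | ⟨j, hj, hx⟩)
    · have hj' : (n + 2) / 3 ≤ j.val ∧ j.val < n := by
        rcases Finset.mem_union.1 hj with h | h <;>
          simp only [mem_alphaF, cc1, cc2, cc3, Nat.reduceAdd] at h <;> omega
      refine ⟨idxN h0 j.val, ?_⟩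
      have e2 : km hn (idxN h0 j.val) = j := by
        refine Fin.ext ?_
        rw [km_val_high (by simp [idxN, Nat.mod_eq_of_lt hj'.2]; omega)]
        simp [idxN, Nat.mod_eq_of_lt hj'.2]
      rwa [e2]
    · have hj' : j.val < (n + 2) / 3 := by
        rw [mem_alphaF, cc0, cc1] at hj; omega
      refine ⟨idxN h0 j.val, ?_⟩
      have e2 : km hn (idxN h0 j.val) = idx h0 (j.val + (n + cc n 1)) := by
        refine Fin.ext ?_
        have hjn : j.val % n = j.val := Nat.mod_eq_of_lt (by omega)
        rw [km_val_low (by simp [idxN, hjn]; omega)]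
        simp only [idxN, idx, hjn, cc1]
        rw [Nat.mod_eq_of_lt (by omega)]
        ring
      rwa [e2]
  · rintro ⟨m, hx⟩
    by_cases hm : m.val < (n + 2) / 3
    · right
      have hmn : m.val < 2 * n := by have := m.isLt; omega
      refine ⟨⟨m.val, hmn⟩, ?_, ?_⟩
      · rw [mem_alphaF, cc0, cc1]; exact ⟨Nat.zero_le _, hm⟩
      · have e1 : idxN h0 (⟨m.val, hmn⟩ : Fin (2 * n)).val = m :=
          Fin.ext (Nat.mod_eq_of_lt m.isLt)
        have e2 : idx h0 ((⟨m.val, hmn⟩ : Fin (2 * n)).val + (n + cc n 1)) = km hn m := by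
          refine Fin.ext ?_
          rw [km_val_low hm]
          simp only [idx, cc1]
          rw [Nat.mod_eq_of_lt (by omega)]
          ring
        rw [e1, e2]
        exact hx
    · left
      have hmn : m.val < 2 * n := by have := m.isLt; omega
      refine ⟨⟨m.val, hmn⟩, ?_, ?_⟩
      · have hm2 : (n + 2) / 3 ≤ m.val := by omega
        have := m.isLt
        rcases lt_or_ge m.val ((2 * n + 2) / 3) with h | h
        · exact Finset.mem_union_left _
            (by simp only [mem_alphaF, cc1, cc2, Nat.reduceAdd, Fin.val_mk]; omega)
        · exact Finset.mem_union_right _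
            (by simp only [mem_alphaF, cc2, cc3, Nat.reduceAdd, Fin.val_mk]; omega)
      · have e1 : idxN h0 (⟨m.val, hmn⟩ : Fin (2 * n)).val = m :=
          Fin.ext (Nat.mod_eq_of_lt m.isLt)
        have e2 : (⟨m.val, hmn⟩ : Fin (2 * n)) = km hn m :=
          (Fin.ext (km_val_high (by omega))).symm
        rw [e1, e2]
        exact hx
end Main

theorem stmt_6
    (n : ℕ) (hn : 3 ≤ n)
    (A : Fin n → Type) [∀ j, CommGroup (A j)] [∀ j, Nontrivial (A j)]
    [∀ j, Module.Free ℤ (Additive (A j))] [∀ j, Module.Finite ℤ (Additive (A j))]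
    (G : Fin (2 * n) → Type) [∀ i, Group (G i)]
    (φ : ∀ i, G i →* (∀ j, A j)) (hφ : ∀ i, Function.Surjective (φ i))
    (s : ∀ (j : Fin n) (i : Fin (2 * n)), A j →* G i)
    (hs : ∀ j i a, φ i (s j i a) j = a)
    (Φ : (∀ i, G i) →* (∀ j, A j)) (hΦ : ∀ g, Φ g = ∏ i, φ i (g i))
    (Y : ∀ i, Set (G i)) (hYfin : ∀ i, (Y i).Finite)
    (hYker : ∀ i, ∀ y ∈ Y i, φ i y = 1)
    (hYgen : ∀ i, Subgroup.closure (Y i ∪ ⋃ j, Set.range (s j i)) = ⊤)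
    :
    Nonempty
      (↥(Subgroup.closure (⋃ i ∈ (alphaF n 0 ∪ alphaF n 3),
            (Ybar Y i
              ∪ (⋃ j ∈ alphaF n 1 ∪ alphaF n 2, Zbar s (idxN (by omega : 0 < n) j.val) i j)
              ∪ ⋃ j ∈ alphaF n 0,
                  Zbar s (idxN (by omega : 0 < n) j.val) i
                    (idx (by omega : 0 < n) (j.val + (n + cc n 1))))))
        ≃* (∀ i : ↥(alphaF n 0 ∪ alphaF n 3), G i.1)) := by

    have h0 : 0 < n := by omega
    classical
    -- the "sum of sections" endomorphism of `∀ j, A j`, for each coordinate `i`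
    let Mh : ∀ i, (∀ j, A j) →* (∀ j, A j) := fun i =>
      ∏ j : Fin n, (φ i).comp ((s j i).comp (Pi.evalMonoidHom A j))
    have hMsingle : ∀ i (j : Fin n) (b : A j), Mh i (Pi.mulSingle j b) = φ i (s j i b) := by
      intro i j b
      show (∏ j' : Fin n, (φ i).comp ((s j' i).comp (Pi.evalMonoidHom A j'))) _ = _
      rw [MonoidHom.finset_prod_apply]
      rw [Finset.prod_eq_single_of_mem j (Finset.mem_univ _) (fun j' _ hne => by
        simp only [MonoidHom.coe_comp, Function.comp_apply, Pi.evalMonoidHom_apply]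
        rw [Pi.mulSingle_eq_of_ne hne, map_one, map_one])]
      simp
    have hMsurj : ∀ i, Function.Surjective (Mh i) := by
      intro i x
      obtain ⟨g, rfl⟩ := hφ i x
      have hsub : Y i ∪ ⋃ j, Set.range (s j i) ⊆ ↑((Mh i).range.comap (φ i)) := by
        rintro z (hz | hz)
        · rw [SetLike.mem_coe, Subgroup.mem_comap, hYker i z hz]
          exact one_mem _
        · simp only [Set.mem_iUnion, Set.mem_range] at hz
          obtain ⟨j, b, rfl⟩ := hz
          rw [SetLike.mem_coe, Subgroup.mem_comap]
          exact ⟨Pi.mulSingle j b, hMsingle i j b⟩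
      have hle := (Subgroup.closure_le _).2 hsub
      rw [hYgen i] at hle
      have hmem := hle (Subgroup.mem_top g)
      rw [Subgroup.mem_comap] at hmem
      exact hmem
    haveI : Module.Finite ℤ (Additive (∀ j, A j)) := by
      let e : (∀ j, Additive (A j)) ≃+ Additive (∀ j, A j) :=
        { toFun := fun x => Additive.ofMul (fun j => (x j).toMul)
          invFun := fun x j => Additive.ofMul (Additive.toMul x j)
          left_inv := fun _ => rfl
          right_inv := fun _ => rfl
          map_add' := fun _ _ => rfl }
      exact Module.Finite.equiv e.toIntLinearEquiv
    have hMinj : ∀ i, Function.Injective (Mh i) := fun i => endo_inj (Mh i) (hMsurj i)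
    let ME : ∀ i, (∀ j, A j) ≃* (∀ j, A j) :=
      fun i => MulEquiv.ofBijective (Mh i) ⟨hMinj i, hMsurj i⟩
    let c : ∀ i, G i →* (∀ j, A j) := fun i => ((ME i).symm.toMonoidHom).comp (φ i)
    have hcY : ∀ i, ∀ y ∈ Y i, c i y = 1 := by
      intro i y hy
      show (ME i).symm (φ i y) = 1
      rw [hYker i y hy, map_one]
    have hcs : ∀ (j : Fin n) i (b : A j), c i (s j i b) = Pi.mulSingle j b := by
      intro j i b
      show (ME i).symm (φ i (s j i b)) = _
      rw [← hMsingle i j b]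
      exact (ME i).symm_apply_apply _
    have hrange := range_eq hn s c Y hYgen hcY hcs
    have hcl : Subgroup.closure (⋃ i ∈ (alphaF n 0 ∪ alphaF n 3),
            (Ybar Y i
              ∪ (⋃ j ∈ alphaF n 1 ∪ alphaF n 2, Zbar s (idxN (by omega : 0 < n) j.val) i j)
              ∪ ⋃ j ∈ alphaF n 0,
                  Zbar s (idxN (by omega : 0 < n) j.val) i
                    (idx (by omega : 0 < n) (j.val + (n + cc n 1)))))
        = (sigmaH hn s c).range := by
      rw [S_eq hn (by omega : 0 < n) s Y, ← hrange]
    exact ⟨(MulEquiv.subgroupCongr hcl).trans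
      (MonoidHom.ofInjective (sigmaH_injective hn s c)).symm⟩


end SB
end
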